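/- Let C be a hereditary class of graphs with bounded maximum degree d. Then for every positive integer p, C has a bounded-size decomposition with parameter p over the property 'bounded connected components': there is N = d^p + 1 such that every G ∈ C admits a vertex partition into at most N parts with every union of p parts inducing a graph whose components have at most p vertices. -/

import Mathlib

/-- A class of (finite) graphs: a predicate on graphs over arbitrary vertex types. -/
def GraphClass : Type 1 :=
  ∀ (V : Type), SimpleGraph V → Prop

/-- `D'` is a subclass of `D`. -/
def Subclass (D' D : GraphClass) : Prop :=
  ∀ (V : Type) (G : SimpleGraph V), D' V G → D V G

/-- A class is hereditary if it is closed under induced subgraphs. -/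
def Hereditary (D : GraphClass) : Prop :=
  ∀ (V : Type) (G : SimpleGraph V) (s : Set V), D V G → D ↥s (G.induce s)

/-- A hereditary class property: a downset of hereditary graph classes. -/
def IsHereditaryProperty (P : Set GraphClass) : Prop :=
  (∀ D ∈ P, Hereditary D) ∧
  ∀ D ∈ P, ∀ D' : GraphClass, Hereditary D' → Subclass D' D → D' ∈ P

/-- `C` has an `f`-bounded `P`-decomposition with parameter `p`: there is `D ∈ P` such
that every finite graph `G ∈ C` admits a partition of its vertex set into at most
`f (|G|)` parts (given by a coloring), the union of any `p` parts inducing a subgraph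
in `D`. -/
def HasDecomp (C : GraphClass) (P : Set GraphClass) (f : ℕ → ℕ) (p : ℕ) : Prop :=
  ∃ D ∈ P, ∀ (V : Type), Finite V → ∀ G : SimpleGraph V, C V G →
    ∃ N : ℕ, N ≤ f (Nat.card V) ∧ ∃ c : V → Fin N,
      ∀ I : Finset (Fin N), I.card ≤ p →
        D ↥{v | c v ∈ I} (G.induce {v | c v ∈ I})


namespace Statement6Aux
open SimpleGraph

variable {V : Type}


lemma subwalk_exists {G : SimpleGraph V} {a b : V} (W : G.Walk a b) :
    ∀ j k : ℕ, j ≤ k → ∃ W' : G.Walk (W.getVert j) (W.getVert k), W'.length ≤ k - j := by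
  induction W with
  | nil =>
    intro j k _
    exact ⟨Walk.nil, by simp⟩
  | cons h q ih =>
    intro j k hjk
    match j, k with
    | 0, 0 => exact ⟨Walk.nil, by simp⟩
    | 0, (k+1) =>
      obtain ⟨W', hW'⟩ := ih 0 k (Nat.zero_le _)
      refine ⟨Walk.cons h (W'.copy (Walk.getVert_zero q) rfl), ?_⟩
      exact (Walk.length_cons _ _).le.trans (Nat.succ_le_succ ((Walk.length_copy _ _ _).le.trans hW'))
    | (j+1), (k+1) =>
      obtain ⟨W', hW'⟩ := ih j k (by omega)
      exact ⟨W'.copy rfl rfl, by simpa using hW'⟩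

lemma path_getVert_ne {G : SimpleGraph V} {a b : V} (W : G.Walk a b) (hW : W.IsPath) :
    ∀ j k : ℕ, j < k → k ≤ W.length → W.getVert j ≠ W.getVert k := by
  induction W with
  | nil => intro j k hjk hk; simp at hk; omega
  | cons h q ih =>
    intro j k hjk hk
    rw [Walk.cons_isPath_iff] at hW
    match j, k with
    | 0, (k+1) =>
      simp only [Walk.getVert_zero, Walk.getVert_cons_succ]
      intro hEq
      exact hW.2 (Walk.mem_support_iff_exists_getVert.2 ⟨k, hEq.symm, by simpa using hk⟩)
    | (j+1), (k+1) =>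
      simp only [Walk.getVert_cons_succ]
      exact ih hW.1 j k (by omega) (by simpa using hk)


lemma greedy_coloring (G : SimpleGraph V) [Finite V] (m : ℕ)
    (h : ∀ v, (G.neighborSet v).ncard ≤ m) :
    ∃ c : V → Fin (m + 1), ∀ u w, G.Adj u w → c u ≠ c w := by
  classical
  have : Fintype V := Fintype.ofFinite V
  let e := Fintype.equivFin V
  have claim : ∀ i : ℕ, ∃ c : V → Fin (m + 1),
      ∀ u w, G.Adj u w → (e u : ℕ) < i → (e w : ℕ) < i → c u ≠ c w := by
    intro i
    induction i with
    | zero => exact ⟨fun _ => 0, fun u w _ hu _ => absurd hu (by omega)⟩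
    | succ i ih =>
      obtain ⟨c, hc⟩ := ih
      by_cases hex : ∃ v : V, (e v : ℕ) = i
      · obtain ⟨v, hv⟩ := hex
        have hne : ∀ u : V, u ≠ v → (e u : ℕ) ≠ i := by
          intro u hu hui
          exact hu (e.injective (Fin.ext (by rw [hui, hv])))
        set nbrsF := (G.neighborSet v).toFinite.toFinset with hnbrsF
        set used := (nbrsF.filter (fun u => (e u : ℕ) < i)).image c with husedDef
        have hcard : used.card < m + 1 := by
          calc used.card ≤ (nbrsF.filter (fun u => (e u : ℕ) < i)).card :=
                Finset.card_image_le
            _ ≤ nbrsF.card := Finset.card_filter_le _ _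
            _ = (G.neighborSet v).ncard :=
                (Set.ncard_eq_toFinset_card _ (G.neighborSet v).toFinite).symm
            _ ≤ m := h v
            _ < m + 1 := Nat.lt_succ_self m
        have hcompl : (usedᶜ : Finset (Fin (m+1))).Nonempty := by
          rw [← Finset.card_pos, Finset.card_compl]
          simp only [Fintype.card_fin]
          omega
        obtain ⟨a, ha⟩ := hcompl
        rw [Finset.mem_compl] at ha
        refine ⟨Function.update c v a, ?_⟩
        intro u w hadj hu hw
        have huw : u ≠ w := G.ne_of_adj hadj
        by_cases h1 : u = v
        · have hwv : w ≠ v := fun hh => huw (h1.trans hh.symm)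
          have hwi : (e w : ℕ) < i := by have := hne w hwv; omega
          rw [h1, Function.update_self, Function.update_of_ne hwv]
          intro heq
          apply ha
          rw [husedDef, heq]
          refine Finset.mem_image_of_mem c (Finset.mem_filter.2
            ⟨(G.neighborSet v).toFinite.mem_toFinset.2 ?_, hwi⟩)
          exact (h1 ▸ hadj : G.Adj v w)
        · by_cases h2 : w = v
          · have hui : (e u : ℕ) < i := by have := hne u h1; omega
            rw [h2, Function.update_self, Function.update_of_ne h1]
            intro heq
            apply ha
            rw [husedDef, ← heq]
            refine Finset.mem_image_of_mem c (Finset.mem_filter.2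
              ⟨(G.neighborSet v).toFinite.mem_toFinset.2 ?_, hui⟩)
            exact (h2 ▸ hadj : G.Adj u v).symm
          · rw [Function.update_of_ne h1, Function.update_of_ne h2]
            have hui : (e u : ℕ) < i := by have := hne u h1; omega
            have hwi : (e w : ℕ) < i := by have := hne w h2; omega
            exact hc u w hadj hui hwi
      · refine ⟨c, fun u w hadj hu hw => hc u w hadj ?_ ?_⟩
        · have h1 : (e u : ℕ) ≠ i := fun hh => hex ⟨u, hh⟩
          omega
        · have h1 : (e w : ℕ) ≠ i := fun hh => hex ⟨w, hh⟩
          omega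
  obtain ⟨c, hc⟩ := claim (Fintype.card V)
  exact ⟨c, fun u w hadj => hc u w hadj (e u).isLt (e w).isLt⟩

lemma ball_ncard_le [Finite V] {G : SimpleGraph V} {d : ℕ}
    (hd : ∀ x : V, (G.neighborSet x).ncard ≤ d) (p : ℕ) (hp : 0 < p) (v : V) :
    {u : V | v ≠ u ∧ ∃ W : G.Walk v u, W.length ≤ p}.ncard ≤ d ^ p := by
  classical
  set S := {u : V | v ≠ u ∧ ∃ W : G.Walk v u, W.length ≤ p} with hS
  by_cases hd0 : d = 0
  · have hSempty : S = ∅ := by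
      ext u
      simp only [hS, Set.mem_setOf_eq, Set.mem_empty_iff_false, iff_false, not_and]
      intro hne ⟨W, _⟩
      have hlen : 0 < W.length := by
        rcases Nat.eq_zero_or_pos W.length with h0 | h0
        · exact absurd (W.eq_of_length_eq_zero h0) hne
        · exact h0
      have hadj : G.Adj v (W.getVert 1) := by
        have := W.adj_getVert_succ (i := 0) hlen
        simpa using this
      have : (G.neighborSet v).ncard = 0 := le_antisymm (hd0 ▸ hd v) (Nat.zero_le _)
      rw [Set.ncard_eq_zero (Set.toFinite _)] at this
      exact (Set.eq_empty_iff_forall_notMem.1 this (W.getVert 1)) hadj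
    simp [hSempty]
  · have hdpos : 0 < d := Nat.pos_of_ne_zero hd0
    -- injections from neighbor sets into Fin d
    have hν : ∀ x : V, ∃ f : G.neighborSet x → Fin d, Function.Injective f := by
      intro x
      have : Fintype (G.neighborSet x) := (Set.toFinite _).fintype
      have hcard : Fintype.card (G.neighborSet x) ≤ Fintype.card (Fin d) := by
        rw [Fintype.card_fin, ← Nat.card_eq_fintype_card, Nat.card_coe_set_eq]
        exact hd x
      obtain ⟨f⟩ := Function.Embedding.nonempty_of_card_le hcard
      exact ⟨f, f.injective⟩
    choose ν hν using hν
    -- partial inverse of ν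
    set g : V → Fin d → V := fun x a =>
      if h : ∃ y : G.neighborSet x, ν x y = a then (h.choose : V) else x with hg
    have hgspec : ∀ (x y : V) (hy : G.Adj x y), g x (ν x ⟨y, hy⟩) = y := by
      intro x y hy
      have hex : ∃ z : G.neighborSet x, ν x z = ν x ⟨y, hy⟩ := ⟨⟨y, hy⟩, rfl⟩
      have : g x (ν x ⟨y, hy⟩) = (hex.choose : V) := dif_pos hex
      rw [this]
      have := hν x hex.choose_spec
      rw [this]
    -- padded vertex sequence of a walk
    set z : ∀ u : V, G.Walk v u → ℕ → V := fun u W j =>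
      if j ≤ W.length then W.getVert j
      else if (j - W.length) % 2 = 0 then W.getVert W.length
      else W.getVert (W.length - 1) with hz
    -- word of a walk
    set wd : ∀ u : V, G.Walk v u → ℕ → Fin d := fun u W j =>
      if h : G.Adj (z u W j) (z u W (j + 1)) then ν (z u W j) ⟨z u W (j + 1), h⟩
      else ⟨0, hdpos⟩ with hwd
    -- path selection
    have hsel : ∀ u : V, u ∈ S →
        ∃ W : G.Walk v u, W.IsPath ∧ 1 ≤ W.length ∧ W.length ≤ p := by
      intro u hu
      obtain ⟨hne, W0, hW0⟩ := hu
      refine ⟨W0.bypass, W0.bypass_isPath, ?_, le_trans (W0.length_bypass_le) hW0⟩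
      rcases Nat.eq_zero_or_pos W0.bypass.length with h0 | h0
      · exact absurd (Walk.eq_of_length_eq_zero h0) hne
      · exact h0
    -- key properties of z for a path of length in [1, p]
    have hadjz : ∀ (u : V) (W : G.Walk v u), 1 ≤ W.length → W.length ≤ p →
        ∀ j, j < p → G.Adj (z u W j) (z u W (j + 1)) := by
      intro u W h1 h2 j hj
      set i := W.length with hi
      by_cases hcase : j + 1 ≤ i
      · have hj1 : j ≤ i := by omega
        have := W.adj_getVert_succ (i := j) (by omega)
        simp only [hz]
        rw [if_pos hj1, if_pos hcase]
        exact this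
      · -- j + 1 > i
        have hbase : G.Adj (W.getVert (i - 1)) (W.getVert i) := by
          have := W.adj_getVert_succ (i := i - 1) (by omega)
          have heq : i - 1 + 1 = i := by omega
          rwa [heq] at this
        by_cases hji : j ≤ i
        · -- j = i
          have hjeq : j = i := by omega
          simp only [hz]
          rw [if_pos hji, if_neg (by omega : ¬ j + 1 ≤ i)]
          rw [if_neg (by omega : ¬ (j + 1 - i) % 2 = 0)]
          rw [hjeq]
          exact hbase.symm
        · -- j > i
          simp only [hz]
          rw [if_neg hji, if_neg (by omega : ¬ j + 1 ≤ i)]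
          rcases Nat.even_or_odd (j - i) with he | ho
          · rw [if_pos (Nat.even_iff.1 he), if_neg (by
              have := Nat.even_iff.1 he; omega)]
            exact hbase.symm
          · rw [if_neg (by have := Nat.odd_iff.1 ho; omega), if_pos (by
              have := Nat.odd_iff.1 ho; omega)]
            exact hbase
    -- decoding
    set dec : (ℕ → Fin d) → ℕ → V := fun w j => Nat.rec v (fun k acc => g acc (w k)) j
      with hdecdef
    have hdec0 : ∀ w, dec w 0 = v := fun w => rfl
    have hdecS : ∀ w j, dec w (j + 1) = g (dec w j) (w j) := fun w j => rfl
    have hdecz : ∀ (u : V) (W : G.Walk v u), 1 ≤ W.length → W.length ≤ p →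
        ∀ j, j ≤ p → dec (wd u W) j = z u W j := by
      intro u W h1 h2 j hj
      induction j with
      | zero =>
        rw [hdec0]
        simp only [hz]
        rw [if_pos (Nat.zero_le _), Walk.getVert_zero]
      | succ j ih =>
        have hjp : j < p := by omega
        have hadj := hadjz u W h1 h2 j hjp
        rw [hdecS, ih (by omega)]
        have hwdj : wd u W j = ν (z u W j) ⟨z u W (j + 1), hadj⟩ := by
          simp only [hwd]
          rw [dif_pos hadj]
        rw [hwdj]
        exact hgspec _ _ hadj
    -- z at the walk length recovers u
    have hzi : ∀ (u : V) (W : G.Walk v u), z u W W.length = u := by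
      intro u W
      simp only [hz]
      rw [if_pos le_rfl, Walk.getVert_length]
    -- the "first repeat" characterization
    have hQ1 : ∀ (u : V) (W : G.Walk v u), 1 ≤ W.length → W.length ≤ p →
        (W.length = p ∨ ∃ k ≤ W.length, z u W (W.length + 1) = z u W k) := by
      intro u W h1 h2
      by_cases hip : W.length = p
      · exact Or.inl hip
      · refine Or.inr ⟨W.length - 1, by omega, ?_⟩
        simp only [hz]
        rw [if_neg (by omega), if_neg (by omega), if_pos (by omega)]
    have hQ2 : ∀ (u : V) (W : G.Walk v u), W.IsPath → 1 ≤ W.length → W.length ≤ p →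
        ∀ j, j < W.length → ¬(j = p ∨ ∃ k ≤ j, z u W (j + 1) = z u W k) := by
      intro u W hP h1 h2 j hj hQ
      rcases hQ with hjp | ⟨k, hk, hzk⟩
      · omega
      · have hz1 : z u W (j + 1) = W.getVert (j + 1) := by
          simp only [hz]; rw [if_pos (by omega)]
        have hz2 : z u W k = W.getVert k := by
          simp only [hz]; rw [if_pos (by omega)]
        rw [hz1, hz2] at hzk
        exact path_getVert_ne W hP k (j + 1) (by omega) (by omega) hzk.symm
    -- the encoding function
    set F : V → (Fin p → Fin d) := fun u =>
      if hu : u ∈ S then (fun j : Fin p => wd u (hsel u hu).choose j)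
      else fun _ => ⟨0, hdpos⟩ with hF
    have hinj : Set.InjOn F S := by
      intro u₁ hu₁ u₂ hu₂ heq
      simp only [hF] at heq
      rw [dif_pos hu₁, dif_pos hu₂] at heq
      obtain ⟨hP₁, hl₁, hp₁⟩ := (hsel u₁ hu₁).choose_spec
      obtain ⟨hP₂, hl₂, hp₂⟩ := (hsel u₂ hu₂).choose_spec
      set W₁ := (hsel u₁ hu₁).choose with hW₁
      set W₂ := (hsel u₂ hu₂).choose with hW₂
      have hw : ∀ j, j < p → wd u₁ W₁ j = wd u₂ W₂ j := by
        intro j hj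
        exact congrFun heq ⟨j, hj⟩
      have hdeceq : ∀ j, j ≤ p → dec (wd u₁ W₁) j = dec (wd u₂ W₂) j := by
        intro j hj
        induction j with
        | zero => rw [hdec0, hdec0]
        | succ j ih => rw [hdecS, hdecS, ih (by omega), hw j (by omega)]
      have hzeq : ∀ j, j ≤ p → z u₁ W₁ j = z u₂ W₂ j := by
        intro j hj
        rw [← hdecz u₁ W₁ hl₁ hp₁ j hj, ← hdecz u₂ W₂ hl₂ hp₂ j hj, hdeceq j hj]
      have hlen : W₁.length = W₂.length := by
        by_contra hne
        rcases Nat.lt_or_ge W₁.length W₂.length with hlt | hge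
        · apply hQ2 u₂ W₂ hP₂ hl₂ hp₂ W₁.length hlt
          rcases hQ1 u₁ W₁ hl₁ hp₁ with hcase | ⟨k, hk, hzk⟩
          · omega
          · exact Or.inr ⟨k, hk, by
              rw [← hzeq (W₁.length + 1) (by omega), ← hzeq k (by omega)]
              exact hzk⟩
        · have hlt : W₂.length < W₁.length := by omega
          apply hQ2 u₁ W₁ hP₁ hl₁ hp₁ W₂.length hlt
          rcases hQ1 u₂ W₂ hl₂ hp₂ with hcase | ⟨k, hk, hzk⟩
          · omega
          · exact Or.inr ⟨k, hk, by
              rw [hzeq (W₂.length + 1) (by omega), hzeq k (by omega)]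
              exact hzk⟩
      calc u₁ = z u₁ W₁ W₁.length := (hzi u₁ W₁).symm
        _ = z u₂ W₂ W₁.length := hzeq _ hp₁
        _ = z u₂ W₂ W₂.length := by rw [hlen]
        _ = u₂ := hzi u₂ W₂
    calc S.ncard = (F '' S).ncard := (Set.ncard_image_of_injOn hinj).symm
      _ ≤ (Set.univ : Set (Fin p → Fin d)).ncard :=
          Set.ncard_le_ncard (Set.subset_univ _) (Set.toFinite _)
      _ = Nat.card (Fin p → Fin d) := Set.ncard_univ _
      _ = d ^ p := by simp [Nat.card_eq_fintype_card]

end Statement6Aux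

theorem statement6 (C : GraphClass) (hC : Hereditary C) (d : ℕ)
    (hd : ∀ (V : Type), Finite V → ∀ G : SimpleGraph V, C V G →
      ∀ v : V, (G.neighborSet v).ncard ≤ d)
    (p : ℕ) (hp : 0 < p) :
    HasDecomp C
      {D | Hereditary D ∧ ∀ (V : Type) (G : SimpleGraph V), D V G →
        ∀ K : G.ConnectedComponent, K.supp.ncard ≤ p}
      (fun _ => d ^ p + 1) p := by
  classical
  open SimpleGraph Statement6Aux in
  refine ⟨fun V G => ∀ K : G.ConnectedComponent, K.supp.Finite ∧ K.supp.ncard ≤ p,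
    ⟨?_, fun V G h K => (h K).2⟩, ?_⟩
  · -- the witness class is hereditary
    intro V G s hDD K'
    induction K' using SimpleGraph.ConnectedComponent.ind with
    | _ x =>
    have hsub : Subtype.val '' ((G.induce s).connectedComponentMk x).supp ⊆
        (G.connectedComponentMk x.val).supp := by
      rintro y ⟨y', hy', rfl⟩
      rw [ConnectedComponent.mem_supp_iff] at hy' ⊢
      have hreach : (G.induce s).Reachable y' x := ConnectedComponent.exact hy'
      exact ConnectedComponent.sound (hreach.map (SimpleGraph.Embedding.induce s).toHom)
    obtain ⟨hfin, hcard⟩ := hDD (G.connectedComponentMk x.val)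
    have himfin : (Subtype.val '' ((G.induce s).connectedComponentMk x).supp).Finite :=
      hfin.subset hsub
    refine ⟨Set.Finite.of_finite_image himfin
      (Subtype.val_injective.injOn), ?_⟩
    calc ((G.induce s).connectedComponentMk x).supp.ncard
        = (Subtype.val '' ((G.induce s).connectedComponentMk x).supp).ncard :=
          (Set.ncard_image_of_injOn (Subtype.val_injective.injOn)).symm
      _ ≤ (G.connectedComponentMk x.val).supp.ncard := Set.ncard_le_ncard hsub hfin
      _ ≤ p := hcard
  · -- the decomposition
    intro V hV G hG
    refine ⟨d ^ p + 1, le_rfl, ?_⟩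
    set Gp : SimpleGraph V :=
      { Adj := fun u w => u ≠ w ∧ ∃ Wk : G.Walk u w, Wk.length ≤ p
        symm := by
          refine ⟨?_⟩
          rintro u w ⟨hne, Wk, hWk⟩
          exact ⟨hne.symm, Wk.reverse, by rwa [Walk.length_reverse]⟩
        loopless := ⟨fun u h => h.1 rfl⟩ } with hGpdef
    have hdeg : ∀ v : V, (Gp.neighborSet v).ncard ≤ d ^ p := fun v =>
      ball_ncard_le (hd V hV G hG) p hp v
    obtain ⟨c, hc⟩ := greedy_coloring Gp (d ^ p) hdeg
    refine ⟨c, ?_⟩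
    intro I hI
    set S := {v : V | c v ∈ I} with hSdef
    intro K
    refine ⟨Set.toFinite _, ?_⟩
    have hinj : Set.InjOn (fun u : ↥S => c u.val) K.supp := by
      intro u hu w hw hcuw
      by_contra hne
      obtain ⟨W0⟩ : (G.induce S).Reachable u w := by
        rw [ConnectedComponent.mem_supp_iff] at hu hw
        exact ConnectedComponent.exact (hu.trans hw.symm)
      set P := W0.bypass with hPdef
      have hPpath := W0.bypass_isPath
      have hvalne : (u : V) ≠ (w : V) := fun hh => hne (Subtype.ext hh)
      have hPlen : P.length ≤ p := by
        by_contra hlong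
        push_neg at hlong
        have key : ∀ j k : ℕ, j < k → k ≤ p →
            c (P.getVert j).val ≠ c (P.getVert k).val := by
          intro j k hjk hkp heqc
          have hne' : P.getVert j ≠ P.getVert k :=
            path_getVert_ne P hPpath j k hjk (by omega)
          obtain ⟨W', hW'⟩ := subwalk_exists P j k (le_of_lt hjk)
          have hadj : Gp.Adj (P.getVert j).val (P.getVert k).val := by
            refine ⟨fun hh => hne' (Subtype.ext hh),
              W'.map (SimpleGraph.Embedding.induce S).toHom, ?_⟩
            exact (Walk.length_map _ _).le.trans (by omega)
          exact hc _ _ hadj heqc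
        obtain ⟨j, hj, k, hk, hjk, hckj⟩ :=
          Finset.exists_ne_map_eq_of_card_lt_of_maps_to
            (s := Finset.range (p + 1)) (t := I) (f := fun j => c (P.getVert j).val)
            (by rw [Finset.card_range]; omega)
            (fun j _ => (P.getVert j).property)
        rw [Finset.mem_range] at hj hk
        rcases hjk.lt_or_gt with hlt | hlt
        · exact key j k hlt (by omega) hckj
        · exact key k j hlt (by omega) hckj.symm
      have hadj : Gp.Adj u.val w.val :=
        ⟨hvalne, P.map (SimpleGraph.Embedding.induce S).toHom, by exact (Walk.length_map _ _).le.trans hPlen⟩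
      exact hc _ _ hadj hcuw
    calc K.supp.ncard = ((fun u : ↥S => c u.val) '' K.supp).ncard :=
          (Set.ncard_image_of_injOn hinj).symm
      _ ≤ (↑I : Set (Fin (d ^ p + 1))).ncard := by
          refine Set.ncard_le_ncard ?_ (Set.toFinite _)
          rintro y ⟨y', _, rfl⟩
          exact y'.property
      _ = I.card := Set.ncard_coe_finset I
      _ ≤ p := hI
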